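/- Let b ≥ 2 be an integer and λ ∈ (0, 1). Then the sum over all positive integers k of b^{−λ μ_∞(k)} is finite and equals A_{∞,λ} = ∏_{ℓ=1}^∞ (1 + (b−1)/b^{λ ℓ}) − 1, where μ_∞(k) = c_1 + c_2 + ... + c_v is the sum of the positions of all nonzero base-b digits of k. -/

import Mathlib

/-- The infinite Dick weight `μ_∞(k)`: the sum of the positions (counting
from 1) of all nonzero base-`b` digits of `k`; `μ_∞(0) = 0`. -/
def infDickWeight (b k : ℕ) : ℕ :=
  ((((List.range (Nat.digits b k).length).filter
      (fun i => (Nat.digits b k).getD i 0 ≠ 0))).map (· + 1)).sum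

open Finset Filter

private lemma digit_getD (b : ℕ) (hb : 2 ≤ b) (i : ℕ) : ∀ k : ℕ,
    (Nat.digits b k).getD i 0 = k / b ^ i % b := by
  induction i with
  | zero =>
    intro k
    rcases Nat.eq_zero_or_pos k with rfl | hk
    · simp
    · rw [Nat.digits_def' (by omega : 1 < b) hk]; simp
  | succ i ih =>
    intro k
    rcases Nat.eq_zero_or_pos k with rfl | hk
    · simp
    · rw [Nat.digits_def' (by omega : 1 < b) hk]
      have : (k % b :: Nat.digits b (k / b)).getD (i + 1) 0
          = (Nat.digits b (k / b)).getD i 0 := by simp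
      rw [this, ih]
      rw [Nat.div_div_eq_div_mul, ← pow_succ']

private lemma list_aux (p : ℕ → Bool) (f : ℕ → ℕ) (L : ℕ) :
    (((List.range L).filter p).map f).sum
      = ∑ i ∈ Finset.range L, if p i then f i else 0 := by
  induction L with
  | zero => simp
  | succ L ih =>
    rw [List.range_succ, List.filter_append, List.map_append, List.sum_append, ih,
      Finset.sum_range_succ]
    by_cases h : p L <;> simp [h]

/-- `dsum b n k` : sum over the first `n` digit positions. -/
private def dsum (b n k : ℕ) : ℕ :=
  ∑ i ∈ Finset.range n, if k / b ^ i % b ≠ 0 then i + 1 else 0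

private lemma mu_eq_dsum (b : ℕ) (hb : 2 ≤ b) (k n : ℕ) (hn : k < b ^ n) :
    infDickWeight b k = dsum b n k := by
  have hL : (Nat.digits b k).length ≤ n := by
    by_contra hcon
    push_neg at hcon
    rcases Nat.eq_zero_or_pos k with rfl | hk
    · simp at hcon
    · have h1 : b ^ (n + 1) ≤ b ^ (Nat.digits b k).length :=
        Nat.pow_le_pow_right (by omega) (by omega)
      have h2 := Nat.base_pow_length_digits_le b k (by omega : 1 < b) (by omega : k ≠ 0)
      have h3 : b * b ^ n ≤ b * k := by
        calc b * b ^ n = b ^ (n + 1) := (pow_succ' b n).symm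
          _ ≤ b ^ (Nat.digits b k).length := h1
          _ ≤ b * k := h2
      have h4 : b ^ n ≤ k := Nat.le_of_mul_le_mul_left h3 (by omega)
      omega
  unfold infDickWeight dsum
  rw [list_aux]
  simp only [decide_eq_true_eq]
  have hcongr : ∀ i ∈ Finset.range (Nat.digits b k).length,
      (if (Nat.digits b k).getD i 0 ≠ 0 then i + 1 else 0)
        = (if k / b ^ i % b ≠ 0 then i + 1 else 0) := by
    intro i _
    rw [digit_getD b hb]
  rw [Finset.sum_congr rfl hcongr]
  apply Finset.sum_subset (Finset.range_subset_range.2 hL)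
  intro i _ hi
  have hiL : (Nat.digits b k).length ≤ i := by
    simp only [Finset.mem_range, not_lt] at hi; omega
  have hklt : k < b ^ i :=
    lt_of_lt_of_le (Nat.lt_base_pow_length_digits (by omega : 1 < b))
      (Nat.pow_le_pow_right (by omega) hiL)
  simp [Nat.div_eq_of_lt hklt]

private lemma dsum_step (b : ℕ) (hb : 2 ≤ b) (n d r : ℕ) (hd : d < b) (hr : r < b ^ n) :
    dsum b (n + 1) (d * b ^ n + r) = dsum b n r + (if d = 0 then 0 else n + 1) := by
  unfold dsum
  rw [Finset.sum_range_succ]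
  have hbpos : 0 < b := by omega
  congr 1
  · apply Finset.sum_congr rfl
    intro i hi
    have hi' : i < n := Finset.mem_range.1 hi
    have key : (d * b ^ n + r) / b ^ i % b = r / b ^ i % b := by
      have h1 : d * b ^ n + r = b ^ i * (d * b ^ (n - i)) + r := by
        have hni : i + (n - i) = n := by omega
        rw [← mul_assoc, mul_comm (b ^ i) d, mul_assoc, ← pow_add, hni]
      rw [h1, Nat.mul_add_div (Nat.pow_pos (n := i) hbpos)]
      have h2 : d * b ^ (n - i) = b * (d * b ^ (n - i - 1)) := by
        have hmi : n - i - 1 + 1 = n - i := by omega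
        rw [← mul_assoc, mul_comm b d, mul_assoc, ← pow_succ', hmi]
      rw [h2, Nat.mul_add_mod]
    rw [key]
  · have key : (d * b ^ n + r) / b ^ n % b = d := by
      rw [mul_comm, Nat.mul_add_div (Nat.pow_pos (n := n) hbpos),
        Nat.div_eq_of_lt hr, Nat.add_zero, Nat.mod_eq_of_lt hd]
    rw [key]
    by_cases h : d = 0 <;> simp [h]

/-- For an integer base `b ≥ 2` and `λ ∈ (0,1)`, the sum
`∑_{k ≥ 1} b^{-λ μ_∞(k)}` converges and equals
`A_{∞,λ} = ∏_{ℓ=1}^∞ (1 + (b-1)/b^{λℓ}) - 1`. -/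
theorem stmt_16 (b : ℕ) (hb : 2 ≤ b) (l : ℝ) (hl : l ∈ Set.Ioo (0 : ℝ) 1) :
    Summable (fun k : ℕ => (b : ℝ) ^ (-(l * (infDickWeight b (k + 1) : ℝ)))) ∧
    ∑' k : ℕ, (b : ℝ) ^ (-(l * (infDickWeight b (k + 1) : ℝ))) =
      (∏' ℓ : ℕ, (1 + ((b : ℝ) - 1) / (b : ℝ) ^ (l * ((ℓ : ℝ) + 1)))) - 1 := by
  obtain ⟨hl0, hl1⟩ := hl
  have hb1 : (1 : ℝ) < (b : ℝ) := by exact_mod_cast (by omega : 1 < b)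
  have hb0 : (0 : ℝ) < (b : ℝ) := by linarith
  set w : ℕ → ℝ := fun k => (b : ℝ) ^ (-(l * (infDickWeight b k : ℝ))) with hw
  set t : ℕ → ℝ := fun i => (b : ℝ) ^ (-(l * ((i : ℝ) + 1))) with ht
  set f : ℕ → ℝ := fun ℓ => 1 + ((b : ℝ) - 1) / (b : ℝ) ^ (l * ((ℓ : ℝ) + 1)) with hf
  have htpos : ∀ i, 0 < t i := fun i => Real.rpow_pos_of_pos hb0 _
  have hfform : ∀ ℓ, f ℓ = 1 + ((b : ℝ) - 1) * t ℓ := by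
    intro ℓ
    rw [hf, ht]
    simp only []
    rw [Real.rpow_neg (le_of_lt hb0), div_eq_mul_inv]
  have hb1' : (1 : ℝ) ≤ (b : ℝ) - 1 + 1 := by linarith
  have hf1 : ∀ ℓ, (1 : ℝ) ≤ f ℓ := by
    intro ℓ
    rw [hfform]
    nlinarith [htpos ℓ, (by linarith : (0:ℝ) ≤ (b:ℝ) - 1)]
  have hfpos : ∀ ℓ, (0 : ℝ) < f ℓ := fun ℓ => lt_of_lt_of_le one_pos (hf1 ℓ)
  -- geometric bound
  set r : ℝ := (b : ℝ) ^ (-l) with hr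
  have hr0 : 0 < r := Real.rpow_pos_of_pos hb0 _
  have hr1 : r < 1 := Real.rpow_lt_one_of_one_lt_of_neg hb1 (by linarith)
  have htr : ∀ i : ℕ, t i = r ^ (i + 1) := by
    intro i
    rw [ht, hr]
    simp only []
    rw [← Real.rpow_natCast ((b:ℝ) ^ (-l)) (i+1), ← Real.rpow_mul (le_of_lt hb0)]
    congr 1
    push_cast
    ring
  have hsum_a : Summable (fun ℓ : ℕ => ((b : ℝ) - 1) * t ℓ) := by
    have : Summable (fun ℓ : ℕ => r ^ ℓ) := summable_geometric_of_lt_one (le_of_lt hr0) hr1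
    have h2 : Summable (fun ℓ : ℕ => r ^ (ℓ + 1)) := by
      simpa [pow_succ'] using this.mul_left r
    simpa [htr] using h2.mul_left ((b : ℝ) - 1)
  -- multipliability
  have hone_le_prod : ∀ s : Finset ℕ, (1 : ℝ) ≤ ∏ ℓ ∈ s, f ℓ := by
    intro s
    calc (1 : ℝ) = ∏ _ℓ ∈ s, (1 : ℝ) := (Finset.prod_const_one).symm
      _ ≤ ∏ ℓ ∈ s, f ℓ :=
          Finset.prod_le_prod (fun i _ => zero_le_one) (fun i _ => hf1 i)
  have hmono : Monotone (fun s : Finset ℕ => ∏ ℓ ∈ s, f ℓ) := by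
    intro s u hsu
    simp only []
    rw [← Finset.prod_sdiff hsu]
    exact le_mul_of_one_le_left
      (Finset.prod_nonneg (fun i _ => le_of_lt (hfpos i))) (hone_le_prod _)
  have hexp_bound : ∀ s : Finset ℕ,
      ∏ ℓ ∈ s, f ℓ ≤ Real.exp (∑' ℓ, ((b : ℝ) - 1) * t ℓ) := by
    intro s
    calc ∏ ℓ ∈ s, f ℓ ≤ ∏ ℓ ∈ s, Real.exp (((b : ℝ) - 1) * t ℓ) := by
          apply Finset.prod_le_prod (fun i _ => le_of_lt (hfpos i))
          intro i _
          rw [hfform]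
          have := Real.add_one_le_exp (((b : ℝ) - 1) * t i)
          linarith
      _ = Real.exp (∑ ℓ ∈ s, ((b : ℝ) - 1) * t ℓ) := (Real.exp_sum s _).symm
      _ ≤ Real.exp (∑' ℓ, ((b : ℝ) - 1) * t ℓ) := by
          apply Real.exp_le_exp.2
          exact Summable.sum_le_tsum s (fun i _ => mul_nonneg (by linarith) (le_of_lt (htpos i))) hsum_a
  have hbdd : BddAbove (Set.range (fun s : Finset ℕ => ∏ ℓ ∈ s, f ℓ)) := by
    refine ⟨Real.exp (∑' ℓ, ((b : ℝ) - 1) * t ℓ), ?_⟩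
    rintro x ⟨s, rfl⟩
    exact hexp_bound s
  have hmult : Multipliable f := ⟨_, tendsto_atTop_ciSup hmono hbdd⟩
  -- weight recurrence
  have hwpos : ∀ k, 0 < w k := fun k => Real.rpow_pos_of_pos hb0 _
  have hw0 : w 0 = 1 := by
    rw [hw]
    simp [infDickWeight]
  have hwstep : ∀ n d rr : ℕ, d < b → rr < b ^ n →
      w (d * b ^ n + rr) = w rr * (if d = 0 then 1 else t n) := by
    intro n d rr hd hrr
    have hlt : d * b ^ n + rr < b ^ (n + 1) := by
      have : (d + 1) * b ^ n ≤ b * b ^ n := Nat.mul_le_mul_right _ (by omega)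
      calc d * b ^ n + rr < (d + 1) * b ^ n := by rw [add_mul, one_mul]; omega
        _ ≤ b * b ^ n := this
        _ = b ^ (n + 1) := (pow_succ' b n).symm
    rw [hw]
    simp only []
    rw [mu_eq_dsum b hb _ (n + 1) hlt, dsum_step b hb n d rr hd hrr,
      ← mu_eq_dsum b hb rr n hrr]
    by_cases hd0 : d = 0
    · simp [hd0]
    · simp only [hd0, if_false]
      push_cast
      rw [mul_add, neg_add, Real.rpow_add hb0]
  -- partial sums equal partial products
  have hS : ∀ n : ℕ, ∑ k ∈ Finset.range (b ^ n), w k = ∏ ℓ ∈ Finset.range n, f ℓ := by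
    intro n
    induction n with
    | zero => simpa using hw0
    | succ n ih =>
      rw [Finset.prod_range_succ, ← ih]
      have hbij : ∑ k ∈ Finset.range (b ^ (n + 1)), w k
          = ∑ p ∈ Finset.range b ×ˢ Finset.range (b ^ n), w (p.1 * b ^ n + p.2) := by
        apply Finset.sum_nbij' (fun k => (k / b ^ n, k % b ^ n))
          (fun p => p.1 * b ^ n + p.2)
        · intro k hk
          have hk' : k < b ^ (n + 1) := Finset.mem_range.1 hk
          have h1 : k / b ^ n < b := by
            apply Nat.div_lt_of_lt_mul
            rw [mul_comm, ← pow_succ']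
            exact hk'
          have h2 : k % b ^ n < b ^ n := Nat.mod_lt _ (Nat.pow_pos (n := n) (by omega))
          exact Finset.mem_product.2 ⟨Finset.mem_range.2 h1, Finset.mem_range.2 h2⟩
        · rintro ⟨d, rr⟩ hp
          obtain ⟨hd, hrr⟩ := Finset.mem_product.1 hp
          rw [Finset.mem_range] at hd hrr ⊢
          have : (d + 1) * b ^ n ≤ b * b ^ n := Nat.mul_le_mul_right _ (by omega)
          calc d * b ^ n + rr < (d + 1) * b ^ n := by rw [add_mul, one_mul]; omega
            _ ≤ b * b ^ n := this
            _ = b ^ (n + 1) := (pow_succ' b n).symm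
        · intro k _
          simp [Nat.div_add_mod']
        · rintro ⟨d, rr⟩ hp
          obtain ⟨hd, hrr⟩ := Finset.mem_product.1 hp
          rw [Finset.mem_range] at hd hrr
          have h1 : (d * b ^ n + rr) / b ^ n = d := by
            rw [mul_comm, Nat.mul_add_div (Nat.pow_pos (n := n) (by omega)),
              Nat.div_eq_of_lt hrr, Nat.add_zero]
          have h2 : (d * b ^ n + rr) % b ^ n = rr := by
            rw [mul_comm, Nat.mul_add_mod, Nat.mod_eq_of_lt hrr]
          simp [h1, h2]
        · intro k hk
          have hk' : k < b ^ (n + 1) := Finset.mem_range.1 hk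
          rw [Nat.div_add_mod']
      rw [hbij, Finset.sum_product]
      have hinner : ∀ d ∈ Finset.range b,
          ∑ rr ∈ Finset.range (b ^ n), w (d * b ^ n + rr)
            = (if d = 0 then 1 else t n) * ∑ rr ∈ Finset.range (b ^ n), w rr := by
        intro d hd
        rw [Finset.mul_sum]
        apply Finset.sum_congr rfl
        intro rr hrr
        rw [hwstep n d rr (Finset.mem_range.1 hd) (Finset.mem_range.1 hrr)]
        ring
      rw [Finset.sum_congr rfl hinner, ← Finset.sum_mul]
      have hd0 : (0 : ℕ) ∈ Finset.range b := Finset.mem_range.2 (by omega)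
      have hsplit : ∑ d ∈ Finset.range b, (if d = 0 then (1:ℝ) else t n) = f n := by
        rw [← Finset.add_sum_erase _ _ hd0, if_pos rfl]
        have : ∀ d ∈ (Finset.range b).erase 0, (if d = 0 then (1:ℝ) else t n) = t n := by
          intro d hd
          have := Finset.ne_of_mem_erase hd
          simp [this]
        rw [Finset.sum_congr rfl this, Finset.sum_const, Finset.card_erase_of_mem hd0,
          Finset.card_range, hfform]
        have : ((b - 1 : ℕ) : ℝ) = (b : ℝ) - 1 := by
          push_cast [Nat.cast_sub (by omega : 1 ≤ b)]
          ring
        rw [nsmul_eq_mul, this]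
      rw [hsplit]
      ring
  -- summability of w
  have hw_summable : Summable w := by
    apply summable_of_sum_range_le (fun n => le_of_lt (hwpos n))
    intro n
    calc ∑ k ∈ Finset.range n, w k ≤ ∑ k ∈ Finset.range (b ^ n), w k := by
          apply Finset.sum_le_sum_of_subset_of_nonneg
          · exact Finset.range_subset_range.2 (le_of_lt (Nat.lt_pow_self (n := n) (a := b) (by omega)))
          · intro i _ _; exact le_of_lt (hwpos i)
      _ = ∏ ℓ ∈ Finset.range n, f ℓ := hS n
      _ ≤ Real.exp (∑' ℓ, ((b : ℝ) - 1) * t ℓ) := hexp_bound _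
  -- tsum w = tprod f
  have htsum_eq : ∑' k, w k = ∏' ℓ, f ℓ := by
    have h1 : Tendsto (fun n : ℕ => ∑ k ∈ Finset.range (b ^ n), w k) atTop (nhds (∑' k, w k)) :=
      (hw_summable.hasSum.tendsto_sum_nat).comp
        (tendsto_pow_atTop_atTop_of_one_lt (by omega : 1 < b))
    have h2 : Tendsto (fun n : ℕ => ∏ ℓ ∈ Finset.range n, f ℓ) atTop (nhds (∏' ℓ, f ℓ)) :=
      hmult.hasProd.tendsto_prod_nat
    have h1' : Tendsto (fun n : ℕ => ∏ ℓ ∈ Finset.range n, f ℓ) atTop (nhds (∑' k, w k)) := by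
      convert h1 using 1
      ext n
      exact (hS n).symm
    exact tendsto_nhds_unique h1' h2
  -- conclude
  have hshift : Summable (fun k : ℕ => w (k + 1)) := (summable_nat_add_iff 1).2 hw_summable
  refine ⟨hshift, ?_⟩
  have := Summable.tsum_eq_zero_add hw_summable
  rw [hw0, htsum_eq] at this
  have : ∑' k : ℕ, w (k + 1) = (∏' ℓ, f ℓ) - 1 := by linarith
  exact this
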